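/- arXiv:2108.01181 — 3 statements merged into one kernel-verified Lean document; each statement's English description precedes it below -/
import Mathlib

section
/- For a finite nonempty alphabet S of size m, there exists a constant C such that for every n ≥ 1 and every string x₁…x_n over S, the redundancy of the sequential KT probability assignment relative to the best constant probability assignment satisfies log₂( ∏_{a∈S} (N_a/n)^{N_a} / P_KT(x₁…x_n) ) ≤ (m/2)·log₂ n + C, where N_a is the number of occurrences of symbol a in x₁…x_n (with the convention 0⁰ = 1). -/
/-- The sequential Krichevsky–Trofimov probability assignment.  A string
`x₁ … x_n` is represented as a list with the most recent symbol at the head,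
so `ktSeq (a :: xs)` extends the prefix `xs` by the new symbol `a`. -/
noncomputable def ktSeq {S : Type*} [Fintype S] [DecidableEq S] : List S → ℝ
  | [] => 1
  | a :: xs =>
      ktSeq xs * (((xs.count a : ℝ) + 1 / 2) /
        ((xs.length : ℝ) + (Fintype.card S : ℝ) / 2))

private lemma kt_log_le_cubic {x : ℝ} (hx : 0 ≤ x) :
    Real.log (1 + x) ≤ x - x^2/2 + x^3/3 := by
  set F : ℝ → ℝ := fun t => t - t^2/2 + t^3/3 - Real.log (1 + t) with hF
  have hderiv : ∀ t : ℝ, 0 < 1 + t →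
      HasDerivAt F (1 - 2*t^1/2 + 3*t^2/3 - (1+t)⁻¹ * 1) t := by
    intro t ht
    have h1 : HasDerivAt (fun t : ℝ => 1 + t) 1 t := (hasDerivAt_id t).const_add 1
    have hlog : HasDerivAt (fun t : ℝ => Real.log (1 + t)) ((1+t)⁻¹ * 1) t :=
      (Real.hasDerivAt_log (ne_of_gt ht)).comp t h1
    have h2 := (hasDerivAt_pow 2 t).div_const 2
    have h3 := (hasDerivAt_pow 3 t).div_const 3
    exact (((hasDerivAt_id t).sub h2).add h3).sub hlog
  have hmono : MonotoneOn F (Set.Ici (0:ℝ)) := by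
    apply monotoneOn_of_deriv_nonneg (convex_Ici 0)
    · intro t ht
      have ht' : (0:ℝ) < 1 + t := by simp at ht; linarith
      exact (hderiv t ht').continuousAt.continuousWithinAt
    · intro t ht
      rw [interior_Ici] at ht
      have ht' : (0:ℝ) < 1 + t := by
        have : (0:ℝ) < t := ht; linarith
      exact (hderiv t ht').differentiableAt.differentiableWithinAt
    · intro t ht
      rw [interior_Ici] at ht
      have ht0 : (0:ℝ) < t := ht
      have ht' : (0:ℝ) < 1 + t := by linarith
      rw [(hderiv t ht').deriv]
      have : 1 - 2*t^1/2 + 3*t^2/3 - (1+t)⁻¹ * 1 = t^3/(1+t) := by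
        field_simp; ring
      rw [this]; positivity
  have h0 : F 0 = 0 := by simp [hF]
  have := hmono (Set.self_mem_Ici) (Set.mem_Ici.mpr hx) hx
  rw [h0] at this
  simp only [hF] at this
  linarith

private lemma kt_quad_le_log {x : ℝ} (hx : 0 ≤ x) :
    x - x^2/2 ≤ Real.log (1 + x) := by
  set F : ℝ → ℝ := fun t => Real.log (1 + t) - (t - t^2/2) with hF
  have hderiv : ∀ t : ℝ, 0 < 1 + t →
      HasDerivAt F ((1+t)⁻¹ * 1 - (1 - 2*t^1/2)) t := by
    intro t ht
    have h1 : HasDerivAt (fun t : ℝ => 1 + t) 1 t := (hasDerivAt_id t).const_add 1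
    have hlog : HasDerivAt (fun t : ℝ => Real.log (1 + t)) ((1+t)⁻¹ * 1) t :=
      (Real.hasDerivAt_log (ne_of_gt ht)).comp t h1
    have h2 := (hasDerivAt_pow 2 t).div_const 2
    exact hlog.sub ((hasDerivAt_id t).sub h2)
  have hmono : MonotoneOn F (Set.Ici (0:ℝ)) := by
    apply monotoneOn_of_deriv_nonneg (convex_Ici 0)
    · intro t ht
      have ht' : (0:ℝ) < 1 + t := by simp at ht; linarith
      exact (hderiv t ht').continuousAt.continuousWithinAt
    · intro t ht
      rw [interior_Ici] at ht
      have ht' : (0:ℝ) < 1 + t := by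
        have : (0:ℝ) < t := ht; linarith
      exact (hderiv t ht').differentiableAt.differentiableWithinAt
    · intro t ht
      rw [interior_Ici] at ht
      have ht0 : (0:ℝ) < t := ht
      have ht' : (0:ℝ) < 1 + t := by linarith
      rw [(hderiv t ht').deriv]
      have : (1+t)⁻¹ * 1 - (1 - 2*t^1/2) = t^2/(1+t) := by
        field_simp; ring
      rw [this]; positivity
  have h0 : F 0 = 0 := by simp [hF]
  have := hmono (Set.self_mem_Ici) (Set.mem_Ici.mpr hx) hx
  rw [h0] at this
  simp only [hF] at this
  linarith

/-- The key per-symbol inequality: `(N+1)^(N+1) ≤ e · N^N · (N + 1/2)`. -/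
private lemma kt_lemA (N : ℕ) :
    ((N:ℝ)+1)^(N+1) ≤ Real.exp 1 * (N:ℝ)^N * ((N:ℝ) + 1/2) := by
  rcases lt_or_ge N 8 with h8 | h8
  · interval_cases N <;> norm_num <;> nlinarith [Real.exp_one_gt_d9]
  · set x : ℝ := (N:ℝ) with hxdef
    have hx : (8:ℝ) ≤ x := by rw [hxdef]; exact_mod_cast h8
    have hx0 : (0:ℝ) < x := by linarith
    have hc : Real.log (1 + 1/x) ≤ 1/x - (1/x)^2/2 + (1/x)^3/3 :=
      kt_log_le_cubic (by positivity)
    have h1x : (0:ℝ) < 1 + 1/x := by positivity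
    have hpow : (1 + 1/x)^(N+1) ≤ Real.exp ((N+1) * (1/x - (1/x)^2/2 + (1/x)^3/3)) := by
      have h1 : (1 + 1/x) ≤ Real.exp (1/x - (1/x)^2/2 + (1/x)^3/3) := by
        rw [← Real.exp_log h1x]
        exact Real.exp_le_exp.mpr hc
      calc (1 + 1/x)^(N+1) ≤ (Real.exp (1/x - (1/x)^2/2 + (1/x)^3/3))^(N+1) :=
            pow_le_pow_left₀ (le_of_lt h1x) h1 _
        _ = Real.exp ((N+1) * (1/x - (1/x)^2/2 + (1/x)^3/3)) := by
            rw [← Real.exp_nat_mul]; norm_num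
    have hrat : ((N:ℝ)+1) * (1/x - (1/x)^2/2 + (1/x)^3/3)
        ≤ 1 + (1/(2*x) - (1/(2*x))^2/2) := by
      rw [← hxdef]
      have h24 : (0:ℝ) < 24 * x^3 := by positivity
      rw [div_pow, div_pow, div_pow]
      rw [show (1:ℝ)^2 = 1 from one_pow 2, show (1:ℝ)^3 = 1 from one_pow 3]
      have expand : (x+1) * (1/x - 1/x^2/2 + 1/x^3/3) = (24*x^3 + 12*x^2 - 4*x + 8)/(24*x^3) := by
        field_simp; ring
      have expand2 : 1 + (1/(2*x) - 1/(2*x)^2/2) = (24*x^3 + 12*x^2 - 3*x)/(24*x^3) := by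
        field_simp; ring
      rw [expand, expand2, div_le_div_iff₀ h24 h24]
      nlinarith
    have hexp2 : Real.exp (1/(2*x) - (1/(2*x))^2/2) ≤ 1 + 1/(2*x) := by
      have := kt_quad_le_log (x := 1/(2*x)) (by positivity)
      calc Real.exp (1/(2*x) - (1/(2*x))^2/2) ≤ Real.exp (Real.log (1 + 1/(2*x))) :=
            Real.exp_le_exp.mpr this
        _ = 1 + 1/(2*x) := Real.exp_log (by positivity)
    have key : (1 + 1/x)^(N+1) ≤ Real.exp 1 * (1 + 1/(2*x)) := by
      calc (1 + 1/x)^(N+1) ≤ Real.exp ((N+1) * (1/x - (1/x)^2/2 + (1/x)^3/3)) := hpow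
        _ ≤ Real.exp (1 + (1/(2*x) - (1/(2*x))^2/2)) := by
            apply Real.exp_le_exp.mpr
            exact_mod_cast hrat
        _ = Real.exp 1 * Real.exp (1/(2*x) - (1/(2*x))^2/2) := Real.exp_add _ _
        _ ≤ Real.exp 1 * (1 + 1/(2*x)) :=
            mul_le_mul_of_nonneg_left hexp2 (Real.exp_pos 1).le
    have hxpow : (0:ℝ) < x^(N+1) := by positivity
    have hmul := mul_le_mul_of_nonneg_left key hxpow.le
    calc ((N:ℝ)+1)^(N+1) = x^(N+1) * (1 + 1/x)^(N+1) := by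
          rw [← mul_pow]; congr 1; field_simp; rw [hxdef]
      _ ≤ x^(N+1) * (Real.exp 1 * (1 + 1/(2*x))) := hmul
      _ = Real.exp 1 * (x:ℝ)^N * ((x:ℝ) + 1/2) := by
          rw [pow_succ]; field_simp

/-- The key per-step denominator inequality. -/
private lemma kt_lemB (n : ℕ) (hn : 1 ≤ n) (s : ℝ) (hs : 0 < s) :
    Real.exp 1 * (n:ℝ)^n * ((n:ℝ) + s) ≤ ((n:ℝ)+1)^(n+1) * (((n:ℝ)+1)/(n:ℝ)) ^ s := by
  set x : ℝ := (n:ℝ) with hxdef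
  have hx1 : (1:ℝ) ≤ x := by rw [hxdef]; exact_mod_cast hn
  have hx0 : (0:ℝ) < x := by linarith
  have hxs : (0:ℝ) < x + s := by linarith
  have hx1' : (0:ℝ) < x + 1 := by linarith
  have hL : (0:ℝ) < Real.exp 1 * x^n * (x + s) := by positivity
  have hR : (0:ℝ) < (x+1)^(n+1) * ((x+1)/x) ^ s := by positivity
  rw [← Real.log_le_log_iff hL hR]
  rw [Real.log_mul (by positivity) hxs.ne', Real.log_mul (Real.exp_pos 1).ne' (by positivity),
    Real.log_mul (by positivity) (by positivity), Real.log_exp, Real.log_pow, Real.log_pow,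
    Real.log_rpow (by positivity), Real.log_div hx1'.ne' hx0.ne']
  push_cast
  set t : ℝ := (x + s)/(x+1) with htdef
  have ht0 : (0:ℝ) < t := by positivity
  have h1 : Real.log (x/(x+1)) ≤ x/(x+1) - 1 := Real.log_le_sub_one_of_pos (by positivity)
  rw [Real.log_div hx0.ne' hx1'.ne'] at h1
  have hlog1 : 1/(x+1) ≤ Real.log (x+1) - Real.log x := by
    have : x/(x+1) - 1 = -(1/(x+1)) := by field_simp; ring
    rw [this] at h1; linarith
  have h2 : Real.log t ≤ t - 1 := Real.log_le_sub_one_of_pos ht0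
  rw [htdef, Real.log_div hxs.ne' hx1'.ne'] at h2
  have h3 : t ≤ (x + s) * (Real.log (x+1) - Real.log x) := by
    have := mul_le_mul_of_nonneg_left hlog1 hxs.le
    calc t = (x+s) * (1/(x+1)) := by rw [htdef]; ring
      _ ≤ _ := this
  have ht : t = (x+s)/(x+1) := htdef
  nlinarith [h2, h3]

private lemma ktSeq_pos {S : Type*} [Fintype S] [DecidableEq S] [Nonempty S]
    (l : List S) : 0 < ktSeq l := by
  induction l with
  | nil => norm_num [ktSeq]
  | cons a xs ih =>
    have hm : (0:ℝ) < (Fintype.card S : ℝ) := by exact_mod_cast Fintype.card_pos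
    rw [ktSeq]
    refine mul_pos ih (div_pos (by positivity) ?_)
    positivity

private lemma kt_sum_count {S : Type*} [Fintype S] [DecidableEq S]
    (l : List S) : ∑ a : S, l.count a = l.length := by
  induction l with
  | nil => simp
  | cons a xs ih =>
    simp [List.count_cons, Finset.sum_add_distrib, ih, add_comm]

private lemma kt_pow_self_pos (k : ℕ) : (0:ℝ) < (k:ℝ)^k := by
  rcases Nat.eq_zero_or_pos k with h | h
  · simp [h]
  · have : (0:ℝ) < (k:ℝ) := by exact_mod_cast h
    positivity

/-- The main induction: `∏_a N_a^{N_a} ≤ m · n^{m/2} · n^n · ktSeq l`. -/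
private lemma kt_main {S : Type*} [Fintype S] [DecidableEq S] [Nonempty S] :
    ∀ l : List S, 1 ≤ l.length →
      (∏ a : S, ((l.count a : ℝ)) ^ l.count a) ≤
        (Fintype.card S : ℝ) * (l.length : ℝ) ^ ((Fintype.card S : ℝ)/2) *
          (l.length : ℝ) ^ l.length * ktSeq l := by
  intro l
  induction l with
  | nil => intro h; simp at h
  | cons a xs ih =>
    intro _
    have hm : (0:ℝ) < (Fintype.card S : ℝ) := by exact_mod_cast Fintype.card_pos
    rcases Nat.eq_zero_or_pos xs.length with h0 | hpos
    · -- base case : xs = []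
      have hxs : xs = [] := List.length_eq_zero_iff.mp h0
      subst hxs
      have hprod : (∏ b : S, (([a].count b : ℝ))^([a].count b)) = 1 := by
        apply Finset.prod_eq_one
        intro b _
        by_cases h : a = b <;> simp [List.count_cons, h]
      rw [hprod]
      simp only [List.length_cons, List.length_nil, Nat.zero_add, Nat.cast_one, ktSeq,
        List.count_nil, List.length_nil, Nat.cast_zero]
      rw [Real.one_rpow]
      field_simp
      linarith
    · -- inductive step
      have IH := ih hpos
      have hs : (0:ℝ) < (Fintype.card S : ℝ)/2 := by linarith
      have hx0 : (0:ℝ) < (xs.length : ℝ) := by exact_mod_cast hpos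
      set s : ℝ := (Fintype.card S : ℝ)/2 with hsdef
      set x : ℝ := (xs.length : ℝ) with hxdef
      set N : ℕ := xs.count a with hNdef
      set Q : ℝ := ∏ b ∈ Finset.univ.erase a, ((xs.count b : ℝ))^(xs.count b) with hQdef
      have hQpos : 0 < Q := by
        rw [hQdef]
        exact Finset.prod_pos fun b _ => kt_pow_self_pos _
      have hBpos : (0:ℝ) < (N:ℝ)^N := kt_pow_self_pos N
      have hK := ktSeq_pos xs
      have hP : (∏ b : S, ((xs.count b : ℝ))^(xs.count b)) = (N:ℝ)^N * Q :=
        (Finset.mul_prod_erase Finset.univ _ (Finset.mem_univ a)).symm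
      have hP' : (∏ b : S, (((a :: xs).count b : ℝ))^((a :: xs).count b))
          = ((N:ℝ)+1)^(N+1) * Q := by
        rw [← Finset.mul_prod_erase Finset.univ _ (Finset.mem_univ a)]
        congr 1
        · rw [List.count_cons_self]; push_cast; ring
        · refine Finset.prod_congr rfl fun b hb => ?_
          rw [List.count_cons_of_ne (Finset.ne_of_mem_erase hb).symm]
      rw [hP] at IH
      rw [hP']
      rw [ktSeq]
      simp only [List.length_cons]
      push_cast
      rw [← hxdef, ← hNdef, ← hsdef]
      have hD : (0:ℝ) < x + s := by positivity
      rw [show (Fintype.card S : ℝ) * (x+1) ^ ((Fintype.card S : ℝ)/2) * (x+1)^(xs.length+1) *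
            (ktSeq xs * (((N:ℝ) + 1/2)/(x + s)))
          = ((Fintype.card S : ℝ) * (x+1) ^ s * (x+1)^(xs.length+1) * ktSeq xs *
              ((N:ℝ) + 1/2))/(x+s)
          from by rw [← hsdef]; ring]
      rw [le_div_iff₀ hD]
      refine le_of_mul_le_mul_right ?_ (pow_pos hx0 xs.length)
      have hrith : ((x+1)/x) ^ s * x ^ s = (x+1) ^ s := by
        rw [Real.div_rpow (by positivity) hx0.le, div_mul_cancel₀]
        exact (Real.rpow_pos_of_pos hx0 s).ne'
      calc ((N:ℝ)+1)^(N+1) * Q * (x + s) * x ^ xs.length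
          = (((N:ℝ)+1)^(N+1) * (x ^ xs.length * (x + s))) * Q := by ring
        _ ≤ ((Real.exp 1 * (N:ℝ)^N * ((N:ℝ)+1/2)) * (x ^ xs.length * (x + s))) * Q := by
            apply mul_le_mul_of_nonneg_right
              (mul_le_mul_of_nonneg_right (kt_lemA N) (by positivity)) hQpos.le
        _ = ((N:ℝ)^N * Q) * (((N:ℝ)+1/2) * (Real.exp 1 * x ^ xs.length * (x + s))) := by ring
        _ ≤ ((N:ℝ)^N * Q) * (((N:ℝ)+1/2) * ((x+1)^(xs.length+1) * ((x+1)/x) ^ s)) := by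
            refine mul_le_mul_of_nonneg_left
              (mul_le_mul_of_nonneg_left ?_ (by positivity)) (mul_pos hBpos hQpos).le
            exact kt_lemB xs.length hpos s hs
        _ ≤ ((Fintype.card S : ℝ) * x ^ s * x ^ xs.length * ktSeq xs) *
              (((N:ℝ)+1/2) * ((x+1)^(xs.length+1) * ((x+1)/x) ^ s)) := by
            refine mul_le_mul_of_nonneg_right IH ?_
            positivity
        _ = ((Fintype.card S : ℝ) * (x+1) ^ s * (x+1)^(xs.length+1) * ktSeq xs * ((N:ℝ)+1/2))
              * x ^ xs.length := by
            rw [← hrith]; ring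

/-- over a finite nonempty alphabet of size `m`, there is a
constant `C` such that for every nonempty string the redundancy of the
sequential KT assignment relative to the best constant probability assignment
(the empirical distribution, with likelihood `∏_a (N_a/n)^{N_a}`, convention
`0 ^ 0 = 1`) is at most `(m/2) · log₂ n + C`. -/
theorem ktSeq_redundancy_bound
    {S : Type*} [Fintype S] [DecidableEq S] [Nonempty S] :
    ∃ C : ℝ, ∀ l : List S, 1 ≤ l.length →
      Real.logb 2
          ((∏ a : S, ((l.count a : ℝ) / (l.length : ℝ)) ^ l.count a) /
            ktSeq l)
        ≤ ((Fintype.card S : ℝ) / 2) * Real.logb 2 (l.length : ℝ) + C := by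
  refine ⟨Real.logb 2 (Fintype.card S), fun l hl => ?_⟩
  have hm : (0:ℝ) < (Fintype.card S : ℝ) := by exact_mod_cast Fintype.card_pos
  have hx0 : (0:ℝ) < (l.length : ℝ) := by exact_mod_cast hl
  have hkt := ktSeq_pos l
  have hPpos : (0:ℝ) < ∏ a : S, ((l.count a : ℝ)) ^ l.count a :=
    Finset.prod_pos fun a _ => kt_pow_self_pos _
  have hident : (∏ a : S, ((l.count a : ℝ) / (l.length : ℝ)) ^ l.count a)
      = (∏ a : S, ((l.count a : ℝ)) ^ l.count a) / (l.length : ℝ) ^ l.length := by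
    rw [← kt_sum_count l, ← Finset.prod_pow_eq_pow_sum, ← Finset.prod_div_distrib]
    exact Finset.prod_congr rfl fun a _ => (div_pow _ _ _)
  have hRpos : (0:ℝ) <
      (∏ a : S, ((l.count a : ℝ) / (l.length : ℝ)) ^ l.count a) / ktSeq l := by
    rw [hident]; positivity
  have hR : (∏ a : S, ((l.count a : ℝ) / (l.length : ℝ)) ^ l.count a) / ktSeq l
      ≤ (Fintype.card S : ℝ) * (l.length : ℝ) ^ ((Fintype.card S : ℝ)/2) := by
    rw [hident, div_div, div_le_iff₀ (by positivity)]
    exact (kt_main l hl).trans_eq (by ring)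
  have hlogb : Real.logb 2 ((Fintype.card S : ℝ) * (l.length : ℝ) ^ ((Fintype.card S : ℝ)/2))
      = ((Fintype.card S : ℝ)/2) * Real.logb 2 (l.length : ℝ)
          + Real.logb 2 (Fintype.card S) := by
    rw [Real.logb_mul hm.ne' (Real.rpow_pos_of_pos hx0 _).ne']
    rw [Real.logb, Real.logb, Real.logb, Real.log_rpow hx0]
    ring
  calc Real.logb 2 ((∏ a : S, ((l.count a : ℝ) / (l.length : ℝ)) ^ l.count a) / ktSeq l)
      ≤ Real.logb 2 ((Fintype.card S : ℝ) * (l.length : ℝ) ^ ((Fintype.card S : ℝ)/2)) :=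
        (Real.logb_le_logb (by norm_num) hRpos (by positivity)).mpr hR
    _ = _ := hlogb
end

section
/- Let P be a row-stochastic matrix indexed by a finite nonempty set (all entries nonnegative, each row summing to 1). Then the Cesàro averages (1/K) Σ_{k=1}^{K} P^k converge entrywise to a limit matrix as K → ∞. -/
open Filter

section Aux

variable {S : Type*} [Fintype S] [Nonempty S] [DecidableEq S]

private lemma stoch_norm_le (P : Matrix S S ℝ)
    (hnonneg : ∀ i j : S, 0 ≤ P i j)
    (hrow : ∀ i : S, ∑ j : S, P i j = 1) (x : S → ℝ) :
    ‖P.mulVecLin x‖ ≤ ‖x‖ := by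
  rw [pi_norm_le_iff_of_nonneg (norm_nonneg x)]
  intro i
  have : ‖(P.mulVecLin x) i‖ = |∑ j, P i j * x j| := by
    simp [Matrix.mulVecLin_apply, Matrix.mulVec, dotProduct, Real.norm_eq_abs]
  rw [this]
  calc |∑ j, P i j * x j| ≤ ∑ j, |P i j * x j| := Finset.abs_sum_le_sum_abs _ _
    _ ≤ ∑ j, P i j * ‖x‖ := by
        refine Finset.sum_le_sum fun j _ => ?_
        rw [abs_mul, abs_of_nonneg (hnonneg i j)]
        exact mul_le_mul_of_nonneg_left (norm_le_pi_norm x j) (hnonneg i j)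
    _ = ‖x‖ := by rw [← Finset.sum_mul, hrow i, one_mul]

end Aux

/-- for a row-stochastic matrix `P` over a finite nonempty index
set (nonnegative entries, rows summing to `1`), the Cesàro averages
`(1/K) ∑_{k=1}^{K} P^k` converge entrywise as `K → ∞`. -/
theorem cesaro_limit_of_stochastic_matrix
    {S : Type*} [Fintype S] [Nonempty S] [DecidableEq S]
    (P : Matrix S S ℝ)
    (hnonneg : ∀ i j : S, 0 ≤ P i j)
    (hrow : ∀ i : S, ∑ j : S, P i j = 1) :
    ∃ Q : Matrix S S ℝ, ∀ i j : S,
      Tendsto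
        (fun K : ℕ => (1 / (K : ℝ)) * ∑ k ∈ Finset.Icc 1 K, (P ^ k) i j)
        atTop (nhds (Q i j)) := by
  set f : (S → ℝ) →ₗ[ℝ] (S → ℝ) := P.mulVecLin with hf_def
  have hbound : ∀ x : S → ℝ, ‖f x‖ ≤ ‖x‖ := stoch_norm_le P hnonneg hrow
  have hlip : LipschitzWith 1 f := by
    have := AddMonoidHomClass.lipschitz_of_bound f 1 (fun x => by simpa using hbound x)
    simpa using this
  -- iterates
  have hiter : ∀ (n : ℕ) (x : S → ℝ), f^[n] x = (P ^ n).mulVecLin x := by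
    intro n
    induction n with
    | zero => intro x; simp
    | succ n ih =>
        intro x
        rw [Function.iterate_succ_apply', ih]
        simp [hf_def, Matrix.mulVecLin_apply, Matrix.mulVec_mulVec, pow_succ']
  have hiter_bound : ∀ (n : ℕ) (x : S → ℝ), ‖f^[n] x‖ ≤ ‖x‖ := by
    intro n
    induction n with
    | zero => intro x; simp
    | succ n ih =>
        intro x
        rw [Function.iterate_succ_apply']
        exact (hbound _).trans (ih x)
  -- disjointness of fixed points and range of (f - 1)
  have hdisj : Disjoint (LinearMap.eqLocus f 1) (LinearMap.range (f - 1)) := by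
    rw [Submodule.disjoint_def]
    intro y hy hyr
    obtain ⟨z, hz⟩ := hyr
    have hfix : ∀ n : ℕ, f^[n] y = y := by
      intro n
      have : Function.IsFixedPt f y := hy
      exact this.iterate n
    have key : ∀ N : ℕ, (N : ℝ) * ‖y‖ ≤ 2 * ‖z‖ := by
      intro N
      have htel : ∑ n ∈ Finset.range N, (f (f^[n] z) - f^[n] z) = f^[N] z - z := by
        induction N with
        | zero => simp
        | succ N ih =>
            rw [Finset.sum_range_succ, ih, Function.iterate_succ_apply']
            abel
      have hsum : ∑ n ∈ Finset.range N, (f (f^[n] z) - f^[n] z) = (N : ℝ) • y := by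
        have H : ∀ (n : ℕ) (a b : S → ℝ), f^[n] (a - b) = f^[n] a - f^[n] b :=
          iterate_map_sub (f : (S → ℝ) →+ (S → ℝ))
        have hzy : f z - z = y := by simpa using hz
        have : ∀ n : ℕ, f (f^[n] z) - f^[n] z = y := by
          intro n
          calc f (f^[n] z) - f^[n] z
              = f^[n] (f z) - f^[n] z := by
                rw [← Function.iterate_succ_apply' f, Function.iterate_succ_apply]
            _ = f^[n] (f z - z) := (H n _ _).symm
            _ = y := by rw [hzy]; exact hfix n
        simp only [this]
        simp [Finset.sum_const, Nat.cast_smul_eq_nsmul ℝ]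
      have : ‖(N : ℝ) • y‖ ≤ 2 * ‖z‖ := by
        rw [← hsum, htel]
        calc ‖f^[N] z - z‖ ≤ ‖f^[N] z‖ + ‖z‖ := norm_sub_le _ _
          _ ≤ ‖z‖ + ‖z‖ := add_le_add_left (hiter_bound N z) _
          _ = 2 * ‖z‖ := by ring
      simpa [norm_smul, abs_of_nonneg (Nat.cast_nonneg (α := ℝ) N)] using this
    by_contra hy0
    have hpos : 0 < ‖y‖ := norm_pos_iff.mpr hy0
    obtain ⟨N, hN⟩ := exists_nat_gt (2 * ‖z‖ / ‖y‖)
    have h1 := key N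
    have h2 : 2 * ‖z‖ < (N : ℝ) * ‖y‖ := (div_lt_iff₀ hpos).mp hN
    linarith
  -- dimension count gives IsCompl
  have heq : LinearMap.eqLocus f 1 = LinearMap.ker (f - 1) := LinearMap.eqLocus_eq_ker_sub f 1
  have hdim : Module.finrank ℝ (LinearMap.eqLocus f 1)
      + Module.finrank ℝ (LinearMap.range (f - 1)) = Module.finrank ℝ (S → ℝ) := by
    rw [heq, add_comm]
    exact LinearMap.finrank_range_add_finrank_ker (f - 1)
  have hsup : LinearMap.eqLocus f 1 ⊔ LinearMap.range (f - 1) = ⊤ :=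
    Submodule.eq_top_of_disjoint _ _ hdim.ge hdisj
  have hcompl : IsCompl (LinearMap.eqLocus f 1) (LinearMap.range (f - 1)) :=
    ⟨hdisj, codisjoint_iff.mpr hsup⟩
  -- projection
  let gl : (S → ℝ) →ₗ[ℝ] (LinearMap.eqLocus f 1) :=
    Submodule.projectionOnto _ _ hcompl
  let g : (S → ℝ) →L[ℝ] (LinearMap.eqLocus f 1) := LinearMap.toContinuousLinearMap gl
  have hg_proj : ∀ x : LinearMap.eqLocus f 1, g x = x := fun x =>
    Submodule.projectionOnto_apply_left hcompl x
  have hg_ker : (g.ker : Set (S → ℝ)) ⊆ closure (LinearMap.range (f - 1)) := by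
    intro x hx
    apply subset_closure
    have hx0 : gl x = 0 := LinearMap.mem_ker.mp hx
    have hmem : x ∈ LinearMap.ker gl := LinearMap.mem_ker.mpr hx0
    rw [Submodule.ker_projectionOnto hcompl] at hmem
    exact hmem
  have main := f.tendsto_birkhoffAverage_of_ker_subset_closure hlip g hg_proj hg_ker
  refine ⟨fun i j => (g (f (Pi.single j 1)) : S → ℝ) i, fun i j => ?_⟩
  have h1 := main (f (Pi.single j 1))
  have h2 : Tendsto (fun K => (birkhoffAverage ℝ f _root_.id K (f (Pi.single j 1))) i)
      atTop (nhds ((g (f (Pi.single j 1)) : S → ℝ) i)) :=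
    ((continuous_apply i).continuousAt).tendsto.comp h1
  have heq2 : ∀ K : ℕ, (1 / (K : ℝ)) * ∑ k ∈ Finset.Icc 1 K, (P ^ k) i j
      = (birkhoffAverage ℝ f _root_.id K (f (Pi.single j 1))) i := by
    intro K
    simp only [birkhoffAverage, birkhoffSum, Pi.smul_apply, smul_eq_mul, one_div, id_eq]
    congr 1
    rw [Finset.sum_apply, ← Finset.Ico_add_one_right_eq_Icc, Finset.sum_Ico_eq_sum_range]
    simp only [Nat.add_sub_cancel]
    refine Finset.sum_congr rfl fun n _ => ?_
    rw [Nat.add_comm 1 n, ← Function.iterate_succ_apply f n, hiter]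
    simp [Matrix.mulVecLin_apply, Matrix.mulVec_single_one, Matrix.transpose_apply]
  simpa only [heq2] using h2
end

section
/- Let P be a row-stochastic matrix over a finite nonempty state set S, let μ₀ be an initial probability distribution on S, and let g : S → ℝ be a cost function with |g(s)| ≤ g_max for all s. Then the long-term average cost λ = lim_{K→∞} (1/K) Σ_{k=1}^{K} Σ_{s∈S} (μ₀ P^k)(s) · g(s) exists (the limit is a real number), and it satisfies |λ| ≤ g_max. -/
open Filter Topology

set_option linter.unusedSectionVars false
set_option maxHeartbeats 1000000

section Aux
variable {S : Type*} [Fintype S] [Nonempty S] [DecidableEq S]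

lemma mulVec_norm_le' (P : Matrix S S ℝ) (hnonneg : ∀ i j : S, 0 ≤ P i j)
    (hrow : ∀ i : S, ∑ j : S, P i j = 1) (x : S → ℝ) :
    ‖P.mulVec x‖ ≤ ‖x‖ := by
  rw [pi_norm_le_iff_of_nonneg (norm_nonneg x)]
  intro i
  calc ‖P.mulVec x i‖ = |∑ j, P i j * x j| := rfl
    _ ≤ ∑ j, |P i j * x j| := Finset.abs_sum_le_sum_abs _ _
    _ ≤ ∑ j, P i j * ‖x‖ := by
        refine Finset.sum_le_sum fun j _ => ?_
        rw [abs_mul, abs_of_nonneg (hnonneg i j)]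
        exact mul_le_mul_of_nonneg_left (norm_le_pi_norm x j) (hnonneg i j)
    _ = ‖x‖ := by rw [← Finset.sum_mul, hrow, one_mul]

/-- vector mean ergodic theorem for a 1-Lipschitz linear self-map of a
finite-dimensional space -/
lemma exists_tendsto_birkhoff (f : (S → ℝ) →ₗ[ℝ] (S → ℝ))
    (hf : ∀ x, ‖f x‖ ≤ ‖x‖) (y : S → ℝ) :
    ∃ L, Tendsto (fun K => birkhoffAverage ℝ f _root_.id K y) atTop (𝓝 L) := by
  have hlip : LipschitzWith 1 f := by
    simpa using AddMonoidHomClass.lipschitz_of_bound f 1 (by simpa using hf)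
  -- fixed space and range of (f - 1) are complementary
  set p : Submodule ℝ (S → ℝ) := LinearMap.eqLocus f 1 with hp
  set q : Submodule ℝ (S → ℝ) := LinearMap.range (f - 1) with hq
  have hdisj : Disjoint p q := by
    rw [Submodule.disjoint_def]
    intro y hyp hyq
    obtain ⟨x, rfl⟩ := hyq
    -- f^[n] x = x + n • (f x - x)
    have hiter : ∀ n : ℕ, f^[n] x = x + (n : ℝ) • ((f - 1) x) := by
      intro n
      induction n with
      | zero => simp
      | succ n ih =>
        rw [Function.iterate_succ_apply', ih]
        have hfix : f ((f - 1) x) = (f - 1) x := hyp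
        push_cast
        simp only [map_add, map_smul, hfix, add_smul, one_smul]
        simp only [LinearMap.sub_apply, Module.End.one_apply]
        abel
    have hbound : ∀ n : ℕ, ‖f^[n] x‖ ≤ ‖x‖ := by
      intro n
      induction n with
      | zero => simp
      | succ n ih =>
        rw [Function.iterate_succ_apply']
        exact (hf _).trans ih
    have hzero : (f - 1) x = 0 := by
      by_contra hne
      obtain ⟨n, hn⟩ := exists_nat_gt ((‖x‖ + ‖x‖) / ‖(f - 1) x‖)
      have hpos : 0 < ‖(f - 1) x‖ := norm_pos_iff.2 hne
      have h1 : (n : ℝ) * ‖(f - 1) x‖ ≤ ‖x‖ + ‖x‖ := by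
        have := hbound n
        rw [hiter n] at this
        have h2 : ‖(n : ℝ) • ((f - 1) x)‖ - ‖x‖ ≤ ‖x + (n : ℝ) • ((f - 1) x)‖ := by
          have := norm_add_le (-x) (x + (n : ℝ) • ((f - 1) x))
          simpa [norm_smul, abs_of_nonneg (n.cast_nonneg : (0:ℝ) ≤ n)] using
            (norm_sub_norm_le ((n : ℝ) • ((f - 1) x)) (-x)).trans (by simp [add_comm])
        rw [norm_smul, Real.norm_natCast] at h2
        linarith
      rw [div_lt_iff₀ hpos] at hn
      linarith
    exact hzero
  have hcompl : IsCompl p q := by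
    have hrank : Module.finrank ℝ p + Module.finrank ℝ q
        = Module.finrank ℝ (S → ℝ) := by
      have h := LinearMap.finrank_range_add_finrank_ker (f - 1)
      rw [hp, hq, LinearMap.eqLocus_eq_ker_sub]
      omega
    refine ⟨hdisj, codisjoint_iff.2 ?_⟩
    apply Submodule.eq_top_of_finrank_eq
    have h2 := Submodule.finrank_sup_add_finrank_inf_eq p q
    rw [disjoint_iff.mp hdisj] at h2
    simp only [finrank_bot, add_zero] at h2
    rw [h2, hrank]
  -- the projection onto p along q
  let gproj : (S → ℝ) →L[ℝ] p :=
    LinearMap.toContinuousLinearMap (p.projectionOnto q hcompl)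
  have hg_proj : ∀ x : p, gproj x = x := fun x =>
    Submodule.projectionOnto_apply_left hcompl x
  have hg_ker : (gproj.ker : Set (S → ℝ)) ⊆ closure (LinearMap.range (f - 1)) := by
    intro x hx
    apply subset_closure
    have : gproj.ker = q := by
      have := Submodule.ker_projectionOnto hcompl (p := p) (q := q)
      rw [← this]; rfl
    rw [this] at hx
    exact hx
  exact ⟨_, LinearMap.tendsto_birkhoffAverage_of_ker_subset_closure f hlip gproj hg_proj
    hg_ker y⟩

end Aux

section Main
variable {S : Type*} [Fintype S] [Nonempty S] [DecidableEq S]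

lemma iterate_mulVecLin (P : Matrix S S ℝ) (k : ℕ) (x : S → ℝ) :
    (P.mulVecLin)^[k] x = (P ^ k).mulVec x := by
  induction k with
  | zero => simp
  | succ k ih =>
    rw [Function.iterate_succ_apply', ih, Matrix.mulVecLin_apply, Matrix.mulVec_mulVec,
      ← pow_succ']

lemma vecMul_pow_prob (P : Matrix S S ℝ)
    (hnonneg : ∀ i j : S, 0 ≤ P i j) (hrow : ∀ i : S, ∑ j : S, P i j = 1)
    (μ₀ : S → ℝ) (hμnonneg : ∀ s : S, 0 ≤ μ₀ s) (hμsum : ∑ s : S, μ₀ s = 1) (k : ℕ) :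
    (∀ s, 0 ≤ Matrix.vecMul μ₀ (P ^ k) s) ∧ ∑ s, Matrix.vecMul μ₀ (P ^ k) s = 1 := by
  induction k with
  | zero => simpa [Matrix.vecMul_one] using ⟨hμnonneg, hμsum⟩
  | succ k ih =>
    have hstep : Matrix.vecMul μ₀ (P ^ (k + 1)) = Matrix.vecMul (Matrix.vecMul μ₀ (P ^ k)) P := by
      rw [Matrix.vecMul_vecMul, ← pow_succ]
    constructor
    · intro s
      rw [hstep]
      exact Finset.sum_nonneg fun i _ => mul_nonneg (ih.1 i) (hnonneg i s)
    · rw [hstep]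
      have : ∑ s, Matrix.vecMul (Matrix.vecMul μ₀ (P ^ k)) P s
          = ∑ i, Matrix.vecMul μ₀ (P ^ k) i * ∑ j, P i j := by
        simp only [Matrix.vecMul, dotProduct, Finset.mul_sum]
        exact Finset.sum_comm
      rw [this]
      simp only [hrow, mul_one]
      exact ih.2

end Main

/-- for a row-stochastic matrix `P` over a finite nonempty state
set `S`, an initial probability distribution `μ₀` on `S`, and a cost function
`g : S → ℝ` with `|g s| ≤ g_max`, the long-term average cost
`λ = lim_{K→∞} (1/K) ∑_{k=1}^{K} ∑_s (μ₀ P^k)(s) · g(s)` exists and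
satisfies `|λ| ≤ g_max`. -/
theorem long_term_average_cost_exists
    {S : Type*} [Fintype S] [Nonempty S] [DecidableEq S]
    (P : Matrix S S ℝ)
    (hnonneg : ∀ i j : S, 0 ≤ P i j)
    (hrow : ∀ i : S, ∑ j : S, P i j = 1)
    (μ₀ : S → ℝ)
    (hμnonneg : ∀ s : S, 0 ≤ μ₀ s)
    (hμsum : ∑ s : S, μ₀ s = 1)
    (g : S → ℝ) (gmax : ℝ)
    (hg : ∀ s : S, |g s| ≤ gmax) :
    ∃ lam : ℝ,
      Tendsto
        (fun K : ℕ => (1 / (K : ℝ)) *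
          ∑ k ∈ Finset.Icc 1 K, ∑ s : S, Matrix.vecMul μ₀ (P ^ k) s * g s)
        atTop (nhds lam) ∧ |lam| ≤ gmax := by
  set f := P.mulVecLin with hf_def
  have hf : ∀ x, ‖f x‖ ≤ ‖x‖ := fun x => mulVec_norm_le' P hnonneg hrow x
  obtain ⟨L, hL⟩ := exists_tendsto_birkhoff f hf (P.mulVec g)
  -- the scalar sequence is μ₀ ⬝ᵥ (birkhoff average)
  have hdot_cont : Continuous fun x : S → ℝ => dotProduct μ₀ x := by
    unfold dotProduct
    exact continuous_finset_sum _ fun i _ => (continuous_const.mul (continuous_apply i))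
  have hfun : ∀ K : ℕ,
      (1 / (K : ℝ)) * ∑ k ∈ Finset.Icc 1 K, ∑ s : S, Matrix.vecMul μ₀ (P ^ k) s * g s
      = dotProduct μ₀ (birkhoffAverage ℝ f _root_.id K (P.mulVec g)) := by
    intro K
    rw [birkhoffAverage, birkhoffSum]
    have hterm : ∀ k : ℕ, ∑ s : S, Matrix.vecMul μ₀ (P ^ (k + 1)) s * g s
        = dotProduct μ₀ (_root_.id (f^[k] (P.mulVec g))) := by
      intro k
      rw [id_eq, hf_def, iterate_mulVecLin, Matrix.mulVec_mulVec, ← pow_succ,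
        Matrix.dotProduct_mulVec]
      rfl
    have hshift : ∑ k ∈ Finset.Icc 1 K, ∑ s : S, Matrix.vecMul μ₀ (P ^ k) s * g s
        = ∑ k ∈ Finset.range K, dotProduct μ₀ (_root_.id (f^[k] (P.mulVec g))) := by
      rw [← Finset.Ico_add_one_right_eq_Icc, Finset.sum_Ico_eq_sum_range]
      exact Finset.sum_congr rfl fun k _ => by rw [add_comm 1 k, hterm k]
    have hsum : dotProduct μ₀ (∑ k ∈ Finset.range K, _root_.id ((⇑f)^[k] (P.mulVec g)))
        = ∑ k ∈ Finset.range K, dotProduct μ₀ (_root_.id ((⇑f)^[k] (P.mulVec g))) := by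
      simp only [dotProduct, Finset.sum_apply, Finset.mul_sum]
      exact Finset.sum_comm
    rw [hshift, dotProduct_smul, hsum, smul_eq_mul, one_div]
  have htend : Tendsto
      (fun K : ℕ => (1 / (K : ℝ)) *
        ∑ k ∈ Finset.Icc 1 K, ∑ s : S, Matrix.vecMul μ₀ (P ^ k) s * g s)
      atTop (nhds (dotProduct μ₀ L)) := by
    have h := (hdot_cont.tendsto L).comp hL
    simp only [Function.comp_def] at h
    exact h.congr fun K => (hfun K).symm
  refine ⟨dotProduct μ₀ L, htend, ?_⟩
  -- bound
  have hbound : ∀ K : ℕ, 1 ≤ K →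
      |(1 / (K : ℝ)) * ∑ k ∈ Finset.Icc 1 K, ∑ s : S, Matrix.vecMul μ₀ (P ^ k) s * g s|
      ≤ gmax := by
    intro K hK
    have hterm : ∀ k : ℕ, |∑ s : S, Matrix.vecMul μ₀ (P ^ k) s * g s| ≤ gmax := by
      intro k
      obtain ⟨hν, hνsum⟩ := vecMul_pow_prob P hnonneg hrow μ₀ hμnonneg hμsum k
      calc |∑ s : S, Matrix.vecMul μ₀ (P ^ k) s * g s|
          ≤ ∑ s : S, |Matrix.vecMul μ₀ (P ^ k) s * g s| := Finset.abs_sum_le_sum_abs _ _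
        _ ≤ ∑ s : S, Matrix.vecMul μ₀ (P ^ k) s * gmax := by
            refine Finset.sum_le_sum fun s _ => ?_
            rw [abs_mul, abs_of_nonneg (hν s)]
            exact mul_le_mul_of_nonneg_left (hg s) (hν s)
        _ = gmax := by rw [← Finset.sum_mul, hνsum, one_mul]
    have hKpos : (0 : ℝ) < K := by exact_mod_cast hK
    rw [abs_mul, abs_of_nonneg (by positivity : (0:ℝ) ≤ 1 / (K:ℝ))]
    calc (1 / (K : ℝ)) * |∑ k ∈ Finset.Icc 1 K, ∑ s : S, Matrix.vecMul μ₀ (P ^ k) s * g s|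
        ≤ (1 / (K : ℝ)) * ∑ k ∈ Finset.Icc 1 K, gmax := by
          refine mul_le_mul_of_nonneg_left ?_ (by positivity)
          exact (Finset.abs_sum_le_sum_abs _ _).trans
            (Finset.sum_le_sum fun k _ => hterm k)
      _ = gmax := by
          rw [Finset.sum_const, Nat.card_Icc]
          simp only [Nat.add_sub_cancel, nsmul_eq_mul]
          field_simp
  have habs : Tendsto
      (fun K : ℕ => |(1 / (K : ℝ)) *
        ∑ k ∈ Finset.Icc 1 K, ∑ s : S, Matrix.vecMul μ₀ (P ^ k) s * g s|)
      atTop (nhds |dotProduct μ₀ L|) := htend.abs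
  exact le_of_tendsto habs (eventually_atTop.2 ⟨1, hbound⟩)
end
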